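/- Let n ≥ 2 and let B be an n×n complex matrix with Σ_{i,j} |B_{ij}|² = 1 and P := Σ_i |B_{ii}|² ≥ 1/n. Define x := (1/(n−1))·Σ_{i≠j} |(Bᴴ B)_{ij}| and y := (n·P − 1)/(n−1). Then either x + y ≤ 1, or ( (x + y − (n−2)/(n−1)) · (n−1)/√n )² + ( (x−y)² · (n−1)/n ) ≤ 1. -/

import Mathlib

open Matrix Finset

set_option maxHeartbeats 1000000

/-- Pure polynomial identity behind the ellipse bound. -/
lemma quad_ident (m u w : ℝ) :
    m ^ 2 * ((u ^ 2 - w ^ 2) + m * (2 * u * w)) ^ 2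
      + (m * (2 * u * w) - m ^ 2 * (u ^ 2 - w ^ 2)) ^ 2
      = m ^ 2 * (1 + m ^ 2) * (u ^ 2 + w ^ 2) ^ 2 := by ring

/-- Matrix form of Theorem 2: for an `n × n` complex matrix `B` with unit Frobenius
norm and `P = ∑ i, |B i i|² ≥ 1/n`, the normalized duality variables
`x = (1/(n-1)) ∑_{i≠j} |(Bᴴ B)_{ij}|` and `y = (nP-1)/(n-1)` lie in the region
`𝒯 ∪ ℰ`. -/
theorem duality_theorem_two_matrix (n : ℕ) (hn : 2 ≤ n)
    (B : Matrix (Fin n) (Fin n) ℂ)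
    (hB : ∑ i, ∑ j, ‖B i j‖ ^ 2 = 1)
    (P : ℝ) (hP : P = ∑ i, ‖B i i‖ ^ 2) (hPn : 1 / (n : ℝ) ≤ P)
    (x y : ℝ)
    (hx : x = (1 / ((n : ℝ) - 1)) * ∑ i, ∑ j ∈ univ.filter (fun j => j ≠ i),
      ‖(Bᴴ * B) i j‖)
    (hy : y = ((n : ℝ) * P - 1) / ((n : ℝ) - 1)) :
    x + y ≤ 1 ∨
      ((x + y - ((n : ℝ) - 2) / ((n : ℝ) - 1)) * (((n : ℝ) - 1) / Real.sqrt n)) ^ 2 +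
        (x - y) ^ 2 * (((n : ℝ) - 1) / n) ≤ 1 := by
  have hn2 : (2:ℝ) ≤ (n:ℝ) := by exact_mod_cast hn
  have hn1pos : (0:ℝ) < (n:ℝ) - 1 := by linarith
  have hnpos : (0:ℝ) < (n:ℝ) := by linarith
  -- basic objects
  set v : Fin n → Fin n → ℝ := fun k i => ‖B k i‖ with hv
  have hvnn : ∀ k i, 0 ≤ v k i := fun k i => norm_nonneg _
  set r : Fin n → ℝ := fun k => ∑ i, v k i ^ 2 with hr
  have hrnn : ∀ k, 0 ≤ r k := fun k => sum_nonneg fun i _ => sq_nonneg _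
  have hrsum : ∑ k, r k = 1 := hB
  set u : Fin n → ℝ := fun k => v k k with hu
  have hur : ∀ k, u k ^ 2 ≤ r k := fun k =>
    single_le_sum (f := fun i => v k i ^ 2) (fun i _ => sq_nonneg _) (mem_univ k)
  set w : Fin n → ℝ := fun k => Real.sqrt (r k - u k ^ 2) with hw
  have hwnn : ∀ k, 0 ≤ w k := fun k => Real.sqrt_nonneg _
  have hw2 : ∀ k, w k ^ 2 = r k - u k ^ 2 := fun k => Real.sq_sqrt (by linarith [hur k])
  have hrk : ∀ k, r k = u k ^ 2 + w k ^ 2 := fun k => by linarith [hw2 k]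
  set m := Real.sqrt ((n : ℝ) - 1) with hmdef
  have hm2 : m ^ 2 = (n : ℝ) - 1 := Real.sq_sqrt (le_of_lt hn1pos)
  have hn' : (n:ℝ) = m ^ 2 + 1 := by linarith
  have hmnn : 0 ≤ m := Real.sqrt_nonneg _
  -- the unnormalized coherence X
  set X := ∑ i, ∑ j ∈ univ.filter (fun j => j ≠ i), ‖(Bᴴ * B) i j‖ with hX
  set G := ∑ k, ((u k + m * w k) ^ 2 - r k) with hG
  set Q := (n : ℝ) * P - 1 with hQ
  have hfil : ∀ (i : Fin n) (f : Fin n → ℝ),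
      ∑ j ∈ univ.filter (fun j => j ≠ i), f j = (∑ j, f j) - f i := by
    intro i f
    rw [filter_ne', sum_erase_eq_sub (mem_univ i)]
  -- Step 1 : X ≤ G
  have hXG : X ≤ G := by
    have h1 : X ≤ ∑ i, ∑ j ∈ univ.filter (fun j => j ≠ i), ∑ k, v k i * v k j := by
      apply sum_le_sum
      intro i _
      apply sum_le_sum
      intro j _
      have he : (Bᴴ * B) i j = ∑ k, (starRingEnd ℂ) (B k i) * B k j := by
        simp [Matrix.mul_apply, Matrix.conjTranspose_apply]
      rw [he]
      refine le_trans (norm_sum_le _ _) (le_of_eq ?_)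
      refine sum_congr rfl fun k _ => ?_
      rw [norm_mul, Complex.norm_conj]
    have h2 : ∑ i, ∑ j ∈ univ.filter (fun j => j ≠ i), ∑ k, v k i * v k j
        = ∑ k, ∑ i, ∑ j ∈ univ.filter (fun j => j ≠ i), v k i * v k j := by
      calc ∑ i, ∑ j ∈ univ.filter (fun j => j ≠ i), ∑ k, v k i * v k j
          = ∑ i, ∑ k, ∑ j ∈ univ.filter (fun j => j ≠ i), v k i * v k j :=
            sum_congr rfl fun i _ => Finset.sum_comm
        _ = ∑ k, ∑ i, ∑ j ∈ univ.filter (fun j => j ≠ i), v k i * v k j :=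
            Finset.sum_comm
    rw [h2] at h1
    refine le_trans h1 (sum_le_sum fun k _ => ?_)
    -- per-row bound
    set S := ∑ j, v k j with hS
    have hSnn : 0 ≤ S := sum_nonneg fun j _ => hvnn k j
    have hrow : ∑ i, ∑ j ∈ univ.filter (fun j => j ≠ i), v k i * v k j
        = S ^ 2 - r k := by
      have hterm : ∀ i : Fin n, ∑ j ∈ univ.filter (fun j => j ≠ i), v k i * v k j
          = v k i * S - v k i ^ 2 := by
        intro i
        rw [← mul_sum, hfil i (fun j => v k j), ← hS]
        ring
      have hrr : r k = ∑ i : Fin n, v k i ^ 2 := rfl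
      rw [sum_congr rfl fun i _ => hterm i, sum_sub_distrib, ← sum_mul, ← hS, ← hrr]
      ring
    rw [hrow]
    -- S ≤ u k + m * w k
    have hsplit : S = u k + ∑ j ∈ univ.erase k, v k j := by
      rw [hS, ← Finset.add_sum_erase _ _ (mem_univ k)]
    set T := ∑ j ∈ univ.erase k, v k j with hT
    have hTnn : 0 ≤ T := sum_nonneg fun j _ => hvnn k j
    have hT2 : T ^ 2 ≤ ((n:ℝ) - 1) * (r k - u k ^ 2) := by
      have hcs := sq_sum_le_card_mul_sum_sq (s := univ.erase k) (f := fun j => v k j)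
      have hcard : ((univ.erase k).card : ℝ) = (n:ℝ) - 1 := by
        rw [card_erase_of_mem (mem_univ k), card_univ, Fintype.card_fin]
        have h1n : (1:ℕ) ≤ n := by omega
        push_cast [Nat.cast_sub h1n]
        ring
      have hsq : ∑ j ∈ univ.erase k, v k j ^ 2 = r k - u k ^ 2 := by
        rw [sum_erase_eq_sub (mem_univ k)]
      calc T ^ 2 ≤ ((univ.erase k).card : ℝ) * ∑ j ∈ univ.erase k, v k j ^ 2 := hcs
        _ = ((n:ℝ) - 1) * (r k - u k ^ 2) := by rw [hcard, hsq]
    have hTle : T ≤ m * w k := by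
      have h1 : (m * w k) ^ 2 = ((n:ℝ) - 1) * (r k - u k ^ 2) := by
        rw [mul_pow, hm2, hw2 k]
      nlinarith [mul_nonneg hmnn (hwnn k), hTnn, hT2, h1]
    have hSle : S ≤ u k + m * w k := by rw [hsplit]; linarith
    have hsq : S ^ 2 ≤ (u k + m * w k) ^ 2 := pow_le_pow_left₀ hSnn hSle 2
    linarith
  -- Step 2 : Q facts
  have hPsum : P = ∑ k, u k ^ 2 := hP
  have hQsum : Q = ∑ k, ((n:ℝ) * u k ^ 2 - r k) := by
    rw [hQ, sum_sub_distrib, ← mul_sum, ← hPsum, hrsum]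
  have hQ0 : 0 ≤ Q := by
    have h1 : 1 ≤ (n:ℝ) * P := (div_le_iff₀' hnpos).1 hPn
    rw [hQ]; linarith
  have hQ1 : Q ≤ (n:ℝ) - 1 := by
    have hP1 : P ≤ 1 := by
      rw [hPsum, ← hrsum]
      exact sum_le_sum fun k _ => hur k
    rw [hQ]; nlinarith
  -- Step 3 : the ellipse bound at the extreme point (G, Q)
  have hkey : ((n:ℝ) - 1) * (G + Q - ((n:ℝ) - 2)) ^ 2 + (G - Q) ^ 2 ≤ (n:ℝ) * ((n:ℝ) - 1) := by
    set a : Fin n → ℝ := fun k => (u k ^ 2 - w k ^ 2) + m * (2 * u k * w k) with ha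
    set b : Fin n → ℝ := fun k => m * (2 * u k * w k) - m ^ 2 * (u k ^ 2 - w k ^ 2) with hb
    set z : Fin n → ℂ := fun k => ⟨m * a k, b k⟩ with hz
    have hzabs : ∀ k, ‖z k‖ = Real.sqrt ((n:ℝ) * ((n:ℝ) - 1)) * r k := by
      intro k
      have hval : m * a k * (m * a k) + b k * b k
          = ((n:ℝ) * ((n:ℝ) - 1)) * (r k * r k) := by
        simp only [ha, hb]
        rw [hrk k, hn']
        ring
      rw [Complex.norm_def, Complex.normSq_mk, hval,
        Real.sqrt_mul (by positivity) (r k * r k), Real.sqrt_mul_self (hrnn k)]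
    have htri : ‖∑ k, z k‖ ≤ ∑ k, ‖z k‖ := norm_sum_le _ _
    have hre : (∑ k, z k).re = m * ∑ k, a k := by
      rw [Complex.re_sum, ← mul_sum]
    have him : (∑ k, z k).im = ∑ k, b k := by rw [Complex.im_sum]
    have hsa : ∑ k, a k = G + Q - ((n:ℝ) - 2) := by
      have hak : ∀ k, a k = ((u k + m * w k) ^ 2 - r k) + ((n:ℝ) * u k ^ 2 - r k)
          - ((n:ℝ) - 2) * r k := by
        intro k
        simp only [ha]
        rw [hrk k, hn']
        ring
      rw [sum_congr rfl fun k _ => hak k, sum_sub_distrib, sum_add_distrib, ← mul_sum,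
        hrsum, ← hG, ← hQsum]
      ring
    have hsb : ∑ k, b k = G - Q := by
      have hbk : ∀ k, b k = ((u k + m * w k) ^ 2 - r k) - ((n:ℝ) * u k ^ 2 - r k) := by
        intro k
        simp only [hb]
        rw [hrk k, hn']
        ring
      rw [sum_congr rfl fun k _ => hbk k, sum_sub_distrib, ← hG, ← hQsum]
    have hsumabs : ∑ k, ‖z k‖ = Real.sqrt ((n:ℝ) * ((n:ℝ) - 1)) := by
      rw [sum_congr rfl fun k _ => hzabs k, ← mul_sum, hrsum, mul_one]
    have hnormsq : ‖∑ k, z k‖ ^ 2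
        = ((n:ℝ) - 1) * (G + Q - ((n:ℝ) - 2)) ^ 2 + (G - Q) ^ 2 := by
      rw [Complex.sq_norm, Complex.normSq_apply, hre, him, hsa, hsb]
      linear_combination ((G + Q - ((n:ℝ) - 2)) ^ 2) * hm2
    have h1 : ‖∑ k, z k‖ ^ 2 ≤ (Real.sqrt ((n:ℝ) * ((n:ℝ) - 1))) ^ 2 := by
      apply pow_le_pow_left₀ (norm_nonneg _)
      rw [← hsumabs]; exact htri
    rw [Real.sq_sqrt (by positivity)] at h1
    rw [← hnormsq]
    exact h1
  -- normalized coordinates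
  have hxv : x = X / ((n:ℝ) - 1) := by rw [hx]; ring
  have hyv : y = Q / ((n:ℝ) - 1) := by rw [hy, hQ]
  by_cases hcase : X + Q ≤ (n:ℝ) - 1
  · left
    rw [hxv, hyv, ← add_div, div_le_one hn1pos]
    exact hcase
  · right
    push_neg at hcase
    -- convexity of the quadratic in X on [n-1-Q, G]
    have hfinal : ((n:ℝ) - 1) * (X + Q - ((n:ℝ) - 2)) ^ 2 + (X - Q) ^ 2
        ≤ (n:ℝ) * ((n:ℝ) - 1) := by
      have ht0 : (n:ℝ) - 1 - Q < X := by linarith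
      have hF0 : ((n:ℝ) - 1) * (((n:ℝ) - 1 - Q) + Q - ((n:ℝ) - 2)) ^ 2
          + (((n:ℝ) - 1 - Q) - Q) ^ 2 ≤ (n:ℝ) * ((n:ℝ) - 1) := by
        nlinarith [mul_nonneg hQ0 (sub_nonneg.2 hQ1)]
      have hGX : 0 ≤ G - X := sub_nonneg.2 hXG
      have hXt0 : 0 ≤ X - ((n:ℝ) - 1 - Q) := le_of_lt (sub_pos.2 ht0)
      have hGt0pos : 0 < G - ((n:ℝ) - 1 - Q) := by linarith
      have hstep : (((n:ℝ) - 1) * (X + Q - ((n:ℝ) - 2)) ^ 2 + (X - Q) ^ 2)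
            * (G - ((n:ℝ) - 1 - Q))
          ≤ ((n:ℝ) * ((n:ℝ) - 1)) * (G - ((n:ℝ) - 1 - Q)) := by
        have h5 : 0 ≤ ((n:ℝ) * ((n:ℝ) - 1)
            - (((n:ℝ) - 1) * (((n:ℝ) - 1 - Q) + Q - ((n:ℝ) - 2)) ^ 2
              + (((n:ℝ) - 1 - Q) - Q) ^ 2)) * (G - X) :=
          mul_nonneg (by linarith) hGX
        have h6 : 0 ≤ ((n:ℝ) * ((n:ℝ) - 1)
            - (((n:ℝ) - 1) * (G + Q - ((n:ℝ) - 2)) ^ 2 + (G - Q) ^ 2))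
              * (X - ((n:ℝ) - 1 - Q)) :=
          mul_nonneg (by linarith) hXt0
        have h7 : 0 ≤ (n:ℝ) * ((X - ((n:ℝ) - 1 - Q)) * ((G - X) * (G - ((n:ℝ) - 1 - Q)))) :=
          mul_nonneg hnpos.le (mul_nonneg hXt0 (mul_nonneg hGX hGt0pos.le))
        nlinarith [h5, h6, h7]
      exact le_of_mul_le_mul_right hstep hGt0pos
    -- translate to the stated form
    set sn := Real.sqrt (n:ℝ) with hsn
    have hsn2 : sn ^ 2 = (n:ℝ) := Real.sq_sqrt (le_of_lt hnpos)
    have hsnpos : 0 < sn := Real.sqrt_pos.2 hnpos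
    have h1ne : ((n:ℝ) - 1) ≠ 0 := ne_of_gt hn1pos
    have hnne : (n:ℝ) ≠ 0 := ne_of_gt hnpos
    have e1 : ((x + y - ((n:ℝ) - 2) / ((n:ℝ) - 1)) * (((n:ℝ) - 1) / sn)) ^ 2
        = (X + Q - ((n:ℝ) - 2)) ^ 2 / (n:ℝ) := by
      rw [hxv, hyv, mul_pow, div_pow, hsn2]
      field_simp
    have e2 : (x - y) ^ 2 * (((n:ℝ) - 1) / (n:ℝ)) = (X - Q) ^ 2 / (((n:ℝ) - 1) * (n:ℝ)) := by
      rw [hxv, hyv]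
      field_simp
    rw [e1, e2, div_add_div _ _ hnne (mul_ne_zero h1ne hnne), div_le_one (by positivity)]
    nlinarith [mul_le_mul_of_nonneg_left hfinal hnpos.le]
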